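/- If X and Y are independent real random variables each with the standard normal distribution N(0,1), then the ratio X/Y follows the standard Cauchy distribution, i.e., for all t, P(X/Y ≤ t) = 1/2 + (1/π)·arctan(t). -/

import Mathlib

open MeasureTheory ProbabilityTheory Real Set

lemma radial_integral_aux : ∫ r in Set.Ioi (0:ℝ), r * rexp (-r^2/2) = 1 := by
  have A : ∀ x : ℝ, HasDerivAt (fun y : ℝ => -rexp (-y^2/2)) (x * rexp (-x^2/2)) x := by
    intro x
    have h : HasDerivAt (fun y : ℝ => -y^2/2) (-x) x := by
      have := ((hasDerivAt_pow 2 x).neg.div_const 2)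
      simpa using this.congr_deriv (by ring)
    have := h.exp.neg
    exact this.congr_deriv (by ring)
  have B : Filter.Tendsto (fun y : ℝ => -rexp (-y^2/2)) Filter.atTop (nhds 0) := by
    rw [show (0:ℝ) = -0 by ring]
    refine (Real.tendsto_exp_atBot.comp ?_).neg
    have : Filter.Tendsto (fun y : ℝ => y^2/2) Filter.atTop Filter.atTop :=
      (Filter.tendsto_pow_atTop two_ne_zero).atTop_div_const (by norm_num)
    have h2 : Filter.Tendsto (fun y : ℝ => -(y^2/2)) Filter.atTop Filter.atBot :=
      Filter.tendsto_neg_atBot_iff.mpr this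
    simpa [neg_div] using h2
  have hint : IntegrableOn (fun x : ℝ => x * rexp (-x^2/2)) (Set.Ioi 0) := by
    have := (integrable_mul_exp_neg_mul_sq (b := 1/2) (by norm_num)).integrableOn
      (s := Set.Ioi (0:ℝ))
    refine this.congr_fun (fun x _ => by ring_nf) measurableSet_Ioi
  have := integral_Ioi_of_hasDerivAt_of_tendsto' (fun x _ => A x) hint B
  simpa using this


lemma angular_mem_aux (t : ℝ) {θ : ℝ} (h0 : θ ≠ 0) :
    θ ∈ Set.Ioo (-π) π ∩ {θ : ℝ | cos θ / sin θ ≤ t} ↔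
      θ ∈ Set.Ico (-(π/2) - arctan t) 0 ∪ Set.Ico (π/2 - arctan t) π := by
  have ha1 : -(π/2) < arctan t := neg_pi_div_two_lt_arctan t
  have ha2 : arctan t < π/2 := arctan_lt_pi_div_two t
  set a := arctan t with ha
  have hcos : 0 < cos a := cos_pos_of_mem_Ioo ⟨ha1, ha2⟩
  have ht' : t * cos a = sin a := by
    rw [show t = tan a from (tan_arctan t).symm, tan_eq_sin_div_cos]
    field_simp
  have hpi := pi_pos
  constructor
  · rintro ⟨⟨h1, h2⟩, hA⟩
    rcases h0.lt_or_gt with hneg | hpos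
    · left
      have hs : sin θ < 0 := sin_neg_of_neg_of_neg_pi_lt hneg h1
      rw [mem_setOf_eq, div_le_iff_of_neg hs] at hA
      refine ⟨?_, hneg⟩
      by_contra hlt
      push_neg at hlt
      have hc : cos (θ + a) < 0 := by
        have := cos_neg_of_pi_div_two_lt_of_lt (x := -(θ+a)) (by linarith) (by linarith)
        rwa [cos_neg] at this
      rw [cos_add] at hc
      have h3 : t * sin θ * cos a = sin θ * sin a := by
        rw [mul_right_comm, ht', mul_comm]
      have h4 := mul_le_mul_of_nonneg_right hA hcos.le
      linarith
    · right
      have hs : 0 < sin θ := sin_pos_of_pos_of_lt_pi hpos h2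
      rw [mem_setOf_eq, div_le_iff₀ hs] at hA
      refine ⟨?_, h2⟩
      by_contra hlt
      push_neg at hlt
      have hc : 0 < cos (θ + a) := cos_pos_of_mem_Ioo ⟨by linarith, by linarith⟩
      rw [cos_add] at hc
      have h3 : t * sin θ * cos a = sin θ * sin a := by
        rw [mul_right_comm, ht', mul_comm]
      have h4 := mul_le_mul_of_nonneg_right hA hcos.le
      linarith
  · rintro (⟨h1, h2⟩ | ⟨h1, h2⟩)
    · have hθI : θ ∈ Set.Ioo (-π) π := ⟨by linarith, by linarith⟩
      have hs : sin θ < 0 := sin_neg_of_neg_of_neg_pi_lt h2 hθI.1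
      refine ⟨hθI, ?_⟩
      rw [mem_setOf_eq, div_le_iff_of_neg hs]
      have hc : 0 ≤ cos (θ + a) := cos_nonneg_of_mem_Icc ⟨by linarith, by linarith⟩
      rw [cos_add] at hc
      have h3 : t * sin θ * cos a = sin θ * sin a := by
        rw [mul_right_comm, ht', mul_comm]
      nlinarith
    · have hθI : θ ∈ Set.Ioo (-π) π := ⟨by linarith, h2⟩
      have hs : 0 < sin θ := sin_pos_of_pos_of_lt_pi (by linarith) h2
      refine ⟨hθI, ?_⟩
      rw [mem_setOf_eq, div_le_iff₀ hs]
      have hc : cos (θ + a) ≤ 0 :=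
        cos_nonpos_of_pi_div_two_le_of_le (by linarith) (by linarith)
      rw [cos_add] at hc
      have h3 : t * sin θ * cos a = sin θ * sin a := by
        rw [mul_right_comm, ht', mul_comm]
      nlinarith

lemma angular_integral_aux (t : ℝ) :
    ∫ θ in Set.Ioo (-π) π, ({θ : ℝ | cos θ / sin θ ≤ t}).indicator (fun _ => (1:ℝ)) θ
      = π + 2 * arctan t := by
  have hA : MeasurableSet {θ : ℝ | cos θ / sin θ ≤ t} :=
    measurableSet_le (Real.measurable_cos.div Real.measurable_sin) measurable_const
  rw [MeasureTheory.setIntegral_indicator hA, setIntegral_const, smul_eq_mul, mul_one]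
  have hae : (Set.Ioo (-π) π ∩ {θ : ℝ | cos θ / sin θ ≤ t} : Set ℝ)
      =ᵐ[volume] ((Set.Ico (-(π/2) - arctan t) 0 ∪ Set.Ico (π/2 - arctan t) π : Set ℝ)) := by
    rw [MeasureTheory.ae_eq_set]
    constructor
    · refine measure_mono_null (t := {(0:ℝ)}) (fun θ hθ => ?_) Real.volume_singleton
      simp only [Set.mem_singleton_iff]
      by_contra h0
      exact hθ.2 ((angular_mem_aux t h0).mp hθ.1)
    · refine measure_mono_null (t := {(0:ℝ)}) (fun θ hθ => ?_) Real.volume_singleton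
      simp only [Set.mem_singleton_iff]
      by_contra h0
      exact hθ.2 ((angular_mem_aux t h0).mpr hθ.1)
  rw [measureReal_def, measure_congr hae]
  have ha1 : -(π/2) < arctan t := neg_pi_div_two_lt_arctan t
  have ha2 : arctan t < π/2 := arctan_lt_pi_div_two t
  have hpi := pi_pos
  have hdisj : Disjoint (Set.Ico (-(π/2) - arctan t) 0) (Set.Ico (π/2 - arctan t) π) := by
    refine Set.disjoint_left.mpr fun θ hθ1 hθ2 => ?_
    have := hθ1.2; have := hθ2.1; linarith
  rw [measure_union hdisj measurableSet_Ico, Real.volume_Ico, Real.volume_Ico,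
    ← ENNReal.ofReal_add (by linarith) (by linarith), ENNReal.toReal_ofReal (by linarith)]
  ring

/-- The ratio of two independent standard Gaussians is standard Cauchy:
`P(X/Y ≤ t) = 1/2 + (1/π)·arctan t`. -/
theorem gaussian_ratio_cauchy {Ω : Type*} [MeasureSpace Ω]
    [IsProbabilityMeasure (ℙ : Measure Ω)]
    (X Y : Ω → ℝ) (hXY : IndepFun X Y ℙ)
    (hX : Measure.map X ℙ = gaussianReal 0 1)
    (hY : Measure.map Y ℙ = gaussianReal 0 1) (t : ℝ) :
    (ℙ {ω | X ω / Y ω ≤ t}).toReal = 1 / 2 + (1 / π) * arctan t := by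
  have hpi := pi_pos
  -- measurability of X and Y
  have hXm : AEMeasurable X ℙ := by
    by_contra h
    rw [Measure.map_of_not_aemeasurable h] at hX
    have h1 : (gaussianReal 0 1 : Measure ℝ) Set.univ = 1 := measure_univ
    rw [← hX] at h1
    simp at h1
  have hYm : AEMeasurable Y ℙ := by
    by_contra h
    rw [Measure.map_of_not_aemeasurable h] at hY
    have h1 : (gaussianReal 0 1 : Measure ℝ) Set.univ = 1 := measure_univ
    rw [← hY] at h1
    simp at h1
  set S : Set (ℝ × ℝ) := {p : ℝ × ℝ | p.1 / p.2 ≤ t} with hSdef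
  have hS : MeasurableSet S :=
    measurableSet_le (measurable_fst.div measurable_snd) measurable_const
  have hmap : Measure.map (fun ω => (X ω, Y ω)) ℙ
      = (gaussianReal 0 1).prod (gaussianReal 0 1) := by
    have := (indepFun_iff_map_prod_eq_prod_map_map hXm hYm).mp hXY
    rwa [hX, hY] at this
  have hPS : ℙ {ω | X ω / Y ω ≤ t} = ((gaussianReal 0 1).prod (gaussianReal 0 1)) S := by
    rw [← hmap, Measure.map_apply_of_aemeasurable (hXm.prodMk hYm) hS]
    rfl
  -- product measure as density against Lebesgue
  have hprod : (gaussianReal 0 1).prod (gaussianReal 0 1)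
      = ((volume : Measure ℝ).prod volume).withDensity
          (fun p => ENNReal.ofReal (gaussianPDFReal 0 1 p.1 * gaussianPDFReal 0 1 p.2)) := by
    refine (Measure.prod_eq fun s u hs hu => ?_)
    rw [withDensity_apply _ (hs.prod hu), ← Measure.prod_restrict]
    simp_rw [fun p : ℝ × ℝ => ENNReal.ofReal_mul (q := gaussianPDFReal 0 1 p.2)
      (gaussianPDFReal_nonneg 0 1 p.1)]
    rw [lintegral_prod_mul ((measurable_gaussianPDFReal 0 1).ennreal_ofReal.aemeasurable)
      ((measurable_gaussianPDFReal 0 1).ennreal_ofReal.aemeasurable)]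
    rw [gaussianReal_apply 0 one_ne_zero s, gaussianReal_apply 0 one_ne_zero u]
    rfl
  have hint : Integrable (fun p : ℝ × ℝ => gaussianPDFReal 0 1 p.1 * gaussianPDFReal 0 1 p.2)
      (volume : Measure (ℝ × ℝ)) := by
    rw [Measure.volume_eq_prod ℝ ℝ]
    exact (integrable_gaussianPDFReal 0 1).mul_prod (integrable_gaussianPDFReal 0 1)
  have h2 : ((gaussianReal 0 1).prod (gaussianReal 0 1)) S
      = ENNReal.ofReal (∫ p in S, gaussianPDFReal 0 1 p.1 * gaussianPDFReal 0 1 p.2) := by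
    rw [hprod, ← Measure.volume_eq_prod ℝ ℝ, withDensity_apply _ hS,
      ← ofReal_integral_eq_lintegral_ofReal hint.integrableOn
        (Filter.Eventually.of_forall fun p =>
          mul_nonneg (gaussianPDFReal_nonneg 0 1 p.1) (gaussianPDFReal_nonneg 0 1 p.2))]
  -- compute the integral via polar coordinates
  have hval : (∫ p in S, gaussianPDFReal 0 1 p.1 * gaussianPDFReal 0 1 p.2)
      = 1 / 2 + (1 / π) * arctan t := by
    rw [← MeasureTheory.integral_indicator hS, ← integral_comp_polarCoord_symm]
    have htarget : polarCoord.target = Set.Ioi (0:ℝ) ×ˢ Set.Ioo (-π) π := rfl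
    rw [htarget]
    have hcongr : ∀ p ∈ Set.Ioi (0:ℝ) ×ˢ Set.Ioo (-π) π,
        p.1 • (S.indicator (fun q : ℝ × ℝ => gaussianPDFReal 0 1 q.1 * gaussianPDFReal 0 1 q.2)
            (polarCoord.symm p))
        = (p.1 * ((2*π)⁻¹ * rexp (-p.1^2/2))) *
            ({θ : ℝ | cos θ / sin θ ≤ t}).indicator (fun _ => (1:ℝ)) p.2 := by
      rintro ⟨r, θ⟩ ⟨hr, hθ⟩
      simp only [Set.mem_Ioi] at hr
      have hsymm : polarCoord.symm (r, θ) = (r * cos θ, r * sin θ) := rfl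
      rw [hsymm]
      have hmemiff : ((r * cos θ, r * sin θ) : ℝ × ℝ) ∈ S ↔ cos θ / sin θ ≤ t := by
        simp only [hSdef, Set.mem_setOf_eq]
        rw [mul_div_mul_left _ _ (ne_of_gt hr)]
      have hg : gaussianPDFReal 0 1 (r * cos θ) * gaussianPDFReal 0 1 (r * sin θ)
          = (2*π)⁻¹ * rexp (-r^2/2) := by
        simp only [gaussianPDFReal, NNReal.coe_one, mul_one, sub_zero]
        rw [show ((√(2 * π))⁻¹ * rexp (-(r * cos θ) ^ 2 / 2)) *
            ((√(2 * π))⁻¹ * rexp (-(r * sin θ) ^ 2 / 2))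
            = ((√(2 * π)) * (√(2 * π)))⁻¹ *
              (rexp (-(r * cos θ) ^ 2 / 2) * rexp (-(r * sin θ) ^ 2 / 2)) by
          rw [mul_inv]; ring]
        rw [Real.mul_self_sqrt (by positivity), ← Real.exp_add]
        have h5 : (r * cos θ)^2 + (r * sin θ)^2 = r^2 := by
          have := sin_sq_add_cos_sq θ
          nlinarith
        have h6 : -(r * cos θ) ^ 2 / 2 + -(r * sin θ) ^ 2 / 2 = -r^2/2 := by linarith
        rw [h6]
      rw [Set.indicator_apply, Set.indicator_apply]
      simp only [Set.mem_setOf_eq, hmemiff]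
      by_cases hmem : cos θ / sin θ ≤ t
      · rw [if_pos hmem, if_pos hmem, hg]
        simp only [smul_eq_mul, mul_one]
      · rw [if_neg hmem, if_neg hmem]
        simp
    rw [MeasureTheory.setIntegral_congr_fun (measurableSet_Ioi.prod measurableSet_Ioo) hcongr,
      Measure.volume_eq_prod ℝ ℝ,
      MeasureTheory.setIntegral_prod_mul (μ := (volume : Measure ℝ)) (ν := (volume : Measure ℝ))
        (fun r : ℝ => r * ((2*π)⁻¹ * rexp (-r^2/2)))
        (fun θ : ℝ => ({θ : ℝ | cos θ / sin θ ≤ t}).indicator (fun _ => (1:ℝ)) θ)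
        (Set.Ioi 0) (Set.Ioo (-π) π)]
    have hrad : (∫ r in Set.Ioi (0:ℝ), r * ((2*π)⁻¹ * rexp (-r^2/2))) = (2*π)⁻¹ := by
      simp_rw [mul_left_comm _ ((2*π)⁻¹) _]
      rw [integral_const_mul, radial_integral_aux, mul_one]
    rw [hrad, angular_integral_aux t]
    field_simp
  rw [hPS, h2, hval, ENNReal.toReal_ofReal]
  have h6 := neg_pi_div_two_lt_arctan t
  have h7 : (1:ℝ)/π > 0 := by positivity
  have h9 : (1/π) * (-(π/2)) = -(1/2 : ℝ) := by field_simp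
  linarith [mul_lt_mul_of_pos_left h6 h7, h9]
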